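/- Let T > 0, ε > 0 and ε₀ > 0. Let ω_ε, ω_{ε₀} : ℝ → [0,∞) be measurable, even, supported in [−ε, ε] and [−ε₀, ε₀] respectively, each with total integral 1. Let u, v : (−∞,0] × [0,T] → ℝ be measurable with u(·,t), v(·,t) integrable on (−∞,0] for each t ∈ [0,T]. Define the moduli of continuity μ(w, ε) = sup_{|z|≤ε} ∫_{{x≤0 : x+z≤0}} |w(x+z) − w(x)| dx for w : (−∞,0] → ℝ, and ν₀(w, ε₀) = sup_{0≤s≤min(ε₀,T)} ∫_{−∞}^{0} |w(x,s) − w(x,0)| dx for w : (−∞,0] × [0,T] → ℝ. Then ∫_0^T ∫_{−∞}^0 ∫_{−∞}^0 (|u(x,0) − v(y,s)| + |v(x,0) − u(y,s)|)·ω_ε(x−y)·ω_{ε₀}(s) dx dy ds ≤ ‖u(·,0) − v(·,0)‖_{L¹((−∞,0])} + (1/2)·(ν₀(u, ε₀) + μ(u(·,0), ε) + ν₀(v, ε₀) + μ(v(·,0), ε)), where the inequality is understood in [0,∞]. -/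

import Mathlib

open MeasureTheory

lemma kz_lint_total (ω : ℝ → ℝ) (hnn : ∀ x, 0 ≤ ω x)
    (hint : ∫ x, ω x = 1) : ∫⁻ x, ENNReal.ofReal (ω x) = 1 := by
  have hInt : Integrable ω := by
    by_contra h
    rw [integral_undef h] at hint; norm_num at hint
  rw [← ofReal_integral_eq_lintegral_ofReal hInt (Filter.Eventually.of_forall hnn), hint,
    ENNReal.ofReal_one]

lemma kz_lint_half (ω : ℝ → ℝ) (hnn : ∀ x, 0 ≤ ω x)
    (heven : ∀ x, ω (-x) = ω x) (hint : ∫ x, ω x = 1) :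
    ∫⁻ s in Set.Ici (0:ℝ), ENNReal.ofReal (ω s) = ENNReal.ofReal (1/2) := by
  have h1 : ∫⁻ s in Set.Iic (0:ℝ), ENNReal.ofReal (ω s)
      = ∫⁻ s in Set.Ici (0:ℝ), ENNReal.ofReal (ω s) := by
    have h := (Measure.measurePreserving_neg (volume : Measure ℝ)).setLIntegral_comp_preimage_emb
      measurableEmbedding_neg (fun s => ENNReal.ofReal (ω s)) (Set.Iic 0)
    rw [show (Neg.neg ⁻¹' Set.Iic (0:ℝ)) = Set.Ici 0 by ext x; simp] at h
    rw [← h]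
    exact setLIntegral_congr_fun measurableSet_Ici
      (fun x _ => by simp [heven x])
  have h2 := lintegral_add_compl (fun s => ENNReal.ofReal (ω s))
    (measurableSet_Iic (a := (0:ℝ))) (μ := volume)
  rw [kz_lint_total ω hnn hint, show (Set.Iic (0:ℝ))ᶜ = Set.Ioi 0 by simp,
    Measure.restrict_congr_set Ioi_ae_eq_Ici, h1] at h2
  have hh : ENNReal.ofReal (1/2 : ℝ) = 1/2 := by
    rw [ENNReal.ofReal_div_of_pos] <;> norm_num
  rw [hh, ENNReal.eq_div_iff (by norm_num) (by norm_num), two_mul]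
  exact h2

lemma kz_slice (ω : ℝ → ℝ) (hone : ∫⁻ x, ENNReal.ofReal (ω x) = 1) (c : ℝ) :
    ∫⁻ t in Set.Iic (0:ℝ), ENNReal.ofReal (ω (t - c)) ≤ 1 := by
  refine le_trans (setLIntegral_le_lintegral _ _) (le_of_eq ?_)
  calc ∫⁻ t, ENNReal.ofReal (ω (t - c))
      = ∫⁻ t, ENNReal.ofReal (ω (t + (-c))) := by simp [sub_eq_add_neg]
    _ = 1 := by rw [lintegral_add_right_eq_self (fun t => ENNReal.ofReal (ω t)) (-c)]; exact hone

lemma kz_spatial (ε : ℝ) (ω : ℝ → ℝ) (hm : Measurable ω)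
    (hsupp : ∀ x, ε < |x| → ω x = 0) (hone : ∫⁻ z, ENNReal.ofReal (ω z) = 1)
    (w : ℝ → ℝ) (hw : Measurable w) (hwint : IntegrableOn w (Set.Iic 0))
    (μw : ℝ)
    (hμw : ∀ z : ℝ, |z| ≤ ε →
      ∫ x in {x : ℝ | x ≤ 0 ∧ x + z ≤ 0}, |w (x + z) - w x| ≤ μw) :
    ∫⁻ y in Set.Iic (0:ℝ), ∫⁻ x in Set.Iic (0:ℝ),
      ENNReal.ofReal |w x - w y| * ENNReal.ofReal (ω (x - y)) ≤ ENNReal.ofReal μw := by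
  set F : ℝ → ℝ → ENNReal := fun y z =>
    if y + z ≤ 0 then ENNReal.ofReal |w (y + z) - w y| * ENNReal.ofReal (ω z) else 0 with hF
  -- translation in the inner integral
  have hinner : ∀ y : ℝ, ∫⁻ x in Set.Iic (0:ℝ),
      ENNReal.ofReal |w x - w y| * ENNReal.ofReal (ω (x - y)) = ∫⁻ z, F y z := by
    intro y
    have h := (measurePreserving_add_right (volume : Measure ℝ) y).setLIntegral_comp_preimage_emb
      (measurableEmbedding_addRight y)
      (fun x => ENNReal.ofReal |w x - w y| * ENNReal.ofReal (ω (x - y))) (Set.Iic 0)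
    rw [← h]
    have hpre : ((fun x => x + y) ⁻¹' Set.Iic (0:ℝ)) = Set.Iic (-y) := by
      ext t; simp only [Set.mem_preimage, Set.mem_Iic]; constructor <;> intro <;> linarith
    rw [hpre, ← lintegral_indicator measurableSet_Iic]
    refine lintegral_congr fun z => ?_
    by_cases hz : z ≤ -y
    · have hzm : z ∈ Set.Iic (-y) := hz
      rw [Set.indicator_of_mem hzm]
      have hz' : y + z ≤ 0 := by linarith
      simp only [hF, if_pos hz', add_sub_cancel_right]
      rw [add_comm z y]
    · have hzm : z ∉ Set.Iic (-y) := hz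
      rw [Set.indicator_of_notMem hzm]
      have hz' : ¬ (y + z ≤ 0) := by intro h'; exact hz (by linarith)
      simp only [hF, if_neg hz']
  calc ∫⁻ y in Set.Iic (0:ℝ), ∫⁻ x in Set.Iic (0:ℝ),
        ENNReal.ofReal |w x - w y| * ENNReal.ofReal (ω (x - y))
      = ∫⁻ y in Set.Iic (0:ℝ), ∫⁻ z, F y z := by
        exact lintegral_congr fun y => hinner y
    _ = ∫⁻ z, ∫⁻ y in Set.Iic (0:ℝ), F y z := by
        refine lintegral_lintegral_swap ?_
        refine Measurable.aemeasurable ?_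
        have : Measurable fun p : ℝ × ℝ =>
            ENNReal.ofReal |w (p.1 + p.2) - w p.1| * ENNReal.ofReal (ω p.2) :=
          (((hw.comp (measurable_fst.add measurable_snd)).sub
            (hw.comp measurable_fst)).abs.ennreal_ofReal).mul
            ((hm.comp measurable_snd).ennreal_ofReal)
        exact Measurable.ite (measurableSet_le (measurable_fst.add measurable_snd)
          measurable_const) this measurable_const
    _ ≤ ∫⁻ z, ENNReal.ofReal μw * ENNReal.ofReal (ω z) := by
        refine lintegral_mono fun z => ?_
        by_cases hz : ω z = 0
        · have : ∀ y, F y z = 0 := by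
            intro y; simp only [hF, hz, ENNReal.ofReal_zero, mul_zero, ite_self]
          simp [this]
        · have hzε : |z| ≤ ε := by
            by_contra h'; exact hz (hsupp z (lt_of_not_ge h'))
          have hSset : {y : ℝ | y ≤ 0 ∧ y + z ≤ 0} = Set.Iic 0 ∩ Set.Iic (-z) := by
            ext t
            simp only [Set.mem_setOf_eq, Set.mem_inter_iff, Set.mem_Iic]
            constructor
            · rintro ⟨h1, h2⟩; exact ⟨h1, by linarith⟩
            · rintro ⟨h1, h2⟩; exact ⟨h1, by linarith⟩
          have hmeasS : MeasurableSet {y : ℝ | y ≤ 0 ∧ y + z ≤ 0} := by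
            rw [hSset]; exact measurableSet_Iic.inter measurableSet_Iic
          have hstep : ∫⁻ y in Set.Iic (0:ℝ), F y z
              = (∫⁻ y in {y : ℝ | y ≤ 0 ∧ y + z ≤ 0}, ENNReal.ofReal |w (y + z) - w y|)
                * ENNReal.ofReal (ω z) := by
            have heq : ∀ y : ℝ, F y z = ({y : ℝ | y + z ≤ 0}).indicator
                (fun y => ENNReal.ofReal |w (y + z) - w y| * ENNReal.ofReal (ω z)) y := by
              intro y
              by_cases hy : y + z ≤ 0
              · have hym : y ∈ {y : ℝ | y + z ≤ 0} := hy
                rw [Set.indicator_of_mem hym]; simp only [hF, if_pos hy]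
              · have hym : y ∉ {y : ℝ | y + z ≤ 0} := hy
                rw [Set.indicator_of_notMem hym]; simp only [hF, if_neg hy]
            have hms : MeasurableSet {y : ℝ | y + z ≤ 0} :=
              measurableSet_le (measurable_id.add measurable_const) measurable_const
            rw [lintegral_congr heq, lintegral_indicator hms,
              Measure.restrict_restrict hms]
            rw [show {y : ℝ | y + z ≤ 0} ∩ Set.Iic 0 = {y : ℝ | y ≤ 0 ∧ y + z ≤ 0} by
              ext t; simp only [Set.mem_inter_iff, Set.mem_setOf_eq, Set.mem_Iic]; tauto]
            exact lintegral_mul_const' _ _ ENNReal.ofReal_ne_top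
          rw [hstep]
          refine mul_le_mul_left ?_ _
          -- integrability of the translate
          have h1 : IntegrableOn (fun y => w (y + z)) (Set.Iic (-z)) := by
            have := ((measurePreserving_add_right (volume : Measure ℝ) z).integrableOn_comp_preimage
              (measurableEmbedding_addRight z) (f := w) (s := Set.Iic 0)).mpr hwint
            have hpre : ((fun x => x + z) ⁻¹' Set.Iic (0:ℝ)) = Set.Iic (-z) := by
              ext t; simp only [Set.mem_preimage, Set.mem_Iic]; constructor <;> intro <;> linarith
            rwa [hpre] at this
          have hint2 : IntegrableOn (fun y => |w (y + z) - w y|) {y : ℝ | y ≤ 0 ∧ y + z ≤ 0} := by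
            rw [hSset]
            exact ((h1.mono_set Set.inter_subset_right).sub
              (hwint.mono_set Set.inter_subset_left)).abs
          rw [← ofReal_integral_eq_lintegral_ofReal hint2
            (Filter.Eventually.of_forall fun y => abs_nonneg _)]
          exact ENNReal.ofReal_le_ofReal (hμw z hzε)
    _ = ENNReal.ofReal μw := by
        rw [lintegral_const_mul' _ _ ENNReal.ofReal_ne_top, hone, mul_one]

lemma kz_temporal (T ε₀ : ℝ) (hT : 0 < T) (ω : ℝ → ℝ) (hm : Measurable ω)
    (hsupp : ∀ x, ε₀ < |x| → ω x = 0)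
    (hhalf : ∫⁻ s in Set.Ici (0:ℝ), ENNReal.ofReal (ω s) = ENNReal.ofReal (1/2))
    (w : ℝ → ℝ → ℝ)
    (hwint : ∀ t ∈ Set.Icc (0:ℝ) T, IntegrableOn (fun x => w x t) (Set.Iic 0))
    (νw : ℝ)
    (hνw : ∀ s, 0 ≤ s → s ≤ min ε₀ T → ∫ x in Set.Iic (0:ℝ), |w x s - w x 0| ≤ νw) :
    ∫⁻ s in Set.Icc (0:ℝ) T,
        (∫⁻ y in Set.Iic (0:ℝ), ENNReal.ofReal |w y 0 - w y s|) * ENNReal.ofReal (ω s)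
      ≤ ENNReal.ofReal νw * ENNReal.ofReal (1/2) := by
  calc ∫⁻ s in Set.Icc (0:ℝ) T,
        (∫⁻ y in Set.Iic (0:ℝ), ENNReal.ofReal |w y 0 - w y s|) * ENNReal.ofReal (ω s)
      ≤ ∫⁻ s in Set.Icc (0:ℝ) T, ENNReal.ofReal νw * ENNReal.ofReal (ω s) := by
        refine setLIntegral_mono (measurable_const.mul hm.ennreal_ofReal) ?_
        intro s hs
        by_cases hzero : ω s = 0
        · simp [hzero]
        · have hsle : s ≤ ε₀ := by
            by_contra h'
            exact hzero (hsupp s (by rw [abs_of_nonneg hs.1]; exact lt_of_not_ge h'))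
          have hmin : s ≤ min ε₀ T := le_min hsle hs.2
          refine mul_le_mul_left ?_ _
          have hint : IntegrableOn (fun y => |w y 0 - w y s|) (Set.Iic 0) :=
            ((hwint 0 ⟨le_refl _, hT.le⟩).sub (hwint s hs)).abs
          rw [← ofReal_integral_eq_lintegral_ofReal hint
            (Filter.Eventually.of_forall fun y => abs_nonneg _)]
          refine ENNReal.ofReal_le_ofReal ?_
          calc ∫ y in Set.Iic (0:ℝ), |w y 0 - w y s|
              = ∫ y in Set.Iic (0:ℝ), |w y s - w y 0| := by simp_rw [abs_sub_comm]
            _ ≤ νw := hνw s hs.1 hmin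
    _ = ENNReal.ofReal νw * ∫⁻ s in Set.Icc (0:ℝ) T, ENNReal.ofReal (ω s) :=
        lintegral_const_mul' _ _ ENNReal.ofReal_ne_top
    _ ≤ ENNReal.ofReal νw * ENNReal.ofReal (1/2) := by
        refine mul_le_mul_right ?_ _
        rw [← hhalf]
        exact lintegral_mono_set fun t ht => ht.1

lemma kz_triple_split {μ ν ρ : Measure ℝ} [SFinite μ] [SFinite ν]
    (F G : ℝ → ℝ → ℝ → ENNReal)
    (hF : Measurable fun p : ℝ × ℝ × ℝ => F p.1 p.2.1 p.2.2)
    (hG : Measurable fun p : ℝ × ℝ × ℝ => G p.1 p.2.1 p.2.2) :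
    ∫⁻ s, ∫⁻ y, ∫⁻ x, (F x y s + G x y s) ∂μ ∂ν ∂ρ =
      (∫⁻ s, ∫⁻ y, ∫⁻ x, F x y s ∂μ ∂ν ∂ρ) + ∫⁻ s, ∫⁻ y, ∫⁻ x, G x y s ∂μ ∂ν ∂ρ := by
  have hFx : ∀ y s : ℝ, Measurable fun x => F x y s := fun y s =>
    hF.comp ((measurable_id.prodMk measurable_const :
      Measurable fun x : ℝ => (x, (y, s))))
  have hFy : ∀ s : ℝ, Measurable fun y => ∫⁻ x, F x y s ∂μ := fun s =>
    Measurable.lintegral_prod_right (f := fun y x => F x y s)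
      (hF.comp (measurable_snd.prodMk (measurable_fst.prodMk measurable_const)))
  have hGy : ∀ s : ℝ, Measurable fun y => ∫⁻ x, G x y s ∂μ := fun s =>
    Measurable.lintegral_prod_right (f := fun y x => G x y s)
      (hG.comp (measurable_snd.prodMk (measurable_fst.prodMk measurable_const)))
  have hFs : Measurable fun s => ∫⁻ y, ∫⁻ x, F x y s ∂μ ∂ν := by
    refine Measurable.lintegral_prod_right (f := fun s y => ∫⁻ x, F x y s ∂μ) ?_
    exact Measurable.lintegral_prod_right (f := fun (q : ℝ × ℝ) x => F x q.2 q.1)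
      (hF.comp (measurable_snd.prodMk
        ((measurable_snd.comp measurable_fst).prodMk (measurable_fst.comp measurable_fst))))
  calc ∫⁻ s, ∫⁻ y, ∫⁻ x, (F x y s + G x y s) ∂μ ∂ν ∂ρ
      = ∫⁻ s, ∫⁻ y, ((∫⁻ x, F x y s ∂μ) + ∫⁻ x, G x y s ∂μ) ∂ν ∂ρ :=
        lintegral_congr fun s => lintegral_congr fun y => lintegral_add_left (hFx y s) _
    _ = ∫⁻ s, ((∫⁻ y, ∫⁻ x, F x y s ∂μ ∂ν) + ∫⁻ y, ∫⁻ x, G x y s ∂μ ∂ν) ∂ρ :=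
        lintegral_congr fun s => lintegral_add_left (hFy s) _
    _ = _ := lintegral_add_left hFs _

lemma kz_triple_split6 {μ ν ρ : Measure ℝ} [SFinite μ] [SFinite ν]
    (F1 F2 F3 F4 F5 F6 : ℝ → ℝ → ℝ → ENNReal)
    (h1 : Measurable fun p : ℝ × ℝ × ℝ => F1 p.1 p.2.1 p.2.2)
    (h2 : Measurable fun p : ℝ × ℝ × ℝ => F2 p.1 p.2.1 p.2.2)
    (h3 : Measurable fun p : ℝ × ℝ × ℝ => F3 p.1 p.2.1 p.2.2)
    (h4 : Measurable fun p : ℝ × ℝ × ℝ => F4 p.1 p.2.1 p.2.2)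
    (h5 : Measurable fun p : ℝ × ℝ × ℝ => F5 p.1 p.2.1 p.2.2)
    (h6 : Measurable fun p : ℝ × ℝ × ℝ => F6 p.1 p.2.1 p.2.2) :
    ∫⁻ s, ∫⁻ y, ∫⁻ x,
        (F1 x y s + (F2 x y s + (F3 x y s + (F4 x y s + (F5 x y s + F6 x y s))))) ∂μ ∂ν ∂ρ
      = (∫⁻ s, ∫⁻ y, ∫⁻ x, F1 x y s ∂μ ∂ν ∂ρ) +
        ((∫⁻ s, ∫⁻ y, ∫⁻ x, F2 x y s ∂μ ∂ν ∂ρ) +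
        ((∫⁻ s, ∫⁻ y, ∫⁻ x, F3 x y s ∂μ ∂ν ∂ρ) +
        ((∫⁻ s, ∫⁻ y, ∫⁻ x, F4 x y s ∂μ ∂ν ∂ρ) +
        ((∫⁻ s, ∫⁻ y, ∫⁻ x, F5 x y s ∂μ ∂ν ∂ρ) +
          (∫⁻ s, ∫⁻ y, ∫⁻ x, F6 x y s ∂μ ∂ν ∂ρ))))) := by
  have e1 := kz_triple_split (μ := μ) (ν := ν) (ρ := ρ) F1
    (fun x y s => F2 x y s + (F3 x y s + (F4 x y s + (F5 x y s + F6 x y s))))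
    h1 (h2.add (h3.add (h4.add (h5.add h6))))
  have e2 := kz_triple_split (μ := μ) (ν := ν) (ρ := ρ) F2
    (fun x y s => F3 x y s + (F4 x y s + (F5 x y s + F6 x y s)))
    h2 (h3.add (h4.add (h5.add h6)))
  have e3 := kz_triple_split (μ := μ) (ν := ν) (ρ := ρ) F3
    (fun x y s => F4 x y s + (F5 x y s + F6 x y s)) h3 (h4.add (h5.add h6))
  have e4 := kz_triple_split (μ := μ) (ν := ν) (ρ := ρ) F4
    (fun x y s => F5 x y s + F6 x y s) h4 (h5.add h6)
  have e5 := kz_triple_split (μ := μ) (ν := ν) (ρ := ρ) F5 F6 h5 h6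
  beta_reduce at e1 e2 e3 e4 e5
  rw [e1, e2, e3, e4, e5]

/-- estimate for the initial-time term in the Kuznetsov
doubling-of-variables argument on the half-line `(-∞, 0]`.  Here `μu, μv`
are upper bounds for the spatial moduli of continuity `μ(u(·,0), ε)`,
`μ(v(·,0), ε)` and `νu, νv` are upper bounds for the temporal moduli
`ν₀(u, ε₀)`, `ν₀(v, ε₀)`. -/
theorem kuznetsov_initial_term_estimate
    (T ε ε₀ : ℝ) (hT : 0 < T) (hε : 0 < ε) (hε₀ : 0 < ε₀)
    (ωε ωε₀ : ℝ → ℝ)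
    (hωε_meas : Measurable ωε) (hωε₀_meas : Measurable ωε₀)
    (hωε_nonneg : ∀ x, 0 ≤ ωε x) (hωε₀_nonneg : ∀ x, 0 ≤ ωε₀ x)
    (hωε_even : ∀ x, ωε (-x) = ωε x) (hωε₀_even : ∀ x, ωε₀ (-x) = ωε₀ x)
    (hωε_supp : ∀ x : ℝ, ε < |x| → ωε x = 0)
    (hωε₀_supp : ∀ x : ℝ, ε₀ < |x| → ωε₀ x = 0)
    (hωε_int : ∫ x, ωε x = 1) (hωε₀_int : ∫ x, ωε₀ x = 1)
    (u v : ℝ → ℝ → ℝ)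
    (hu_meas : Measurable (Function.uncurry u))
    (hv_meas : Measurable (Function.uncurry v))
    (hu_int : ∀ t ∈ Set.Icc (0 : ℝ) T, IntegrableOn (fun x => u x t) (Set.Iic 0))
    (hv_int : ∀ t ∈ Set.Icc (0 : ℝ) T, IntegrableOn (fun x => v x t) (Set.Iic 0))
    (μu μv νu νv : ℝ)
    (hμu : ∀ z : ℝ, |z| ≤ ε →
      ∫ x in {x : ℝ | x ≤ 0 ∧ x + z ≤ 0}, |u (x + z) 0 - u x 0| ≤ μu)
    (hμv : ∀ z : ℝ, |z| ≤ ε →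
      ∫ x in {x : ℝ | x ≤ 0 ∧ x + z ≤ 0}, |v (x + z) 0 - v x 0| ≤ μv)
    (hνu : ∀ s : ℝ, 0 ≤ s → s ≤ min ε₀ T →
      ∫ x in Set.Iic (0 : ℝ), |u x s - u x 0| ≤ νu)
    (hνv : ∀ s : ℝ, 0 ≤ s → s ≤ min ε₀ T →
      ∫ x in Set.Iic (0 : ℝ), |v x s - v x 0| ≤ νv) :
    (∫⁻ s in Set.Icc (0 : ℝ) T, ∫⁻ y in Set.Iic (0 : ℝ), ∫⁻ x in Set.Iic (0 : ℝ),
        ENNReal.ofReal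
          ((|u x 0 - v y s| + |v x 0 - u y s|) * ωε (x - y) * ωε₀ s)) ≤
      ENNReal.ofReal
        ((∫ x in Set.Iic (0 : ℝ), |u x 0 - v x 0|)
          + (1 / 2) * (νu + μu + νv + μv)) := by
  have h0T : (0:ℝ) ∈ Set.Icc (0:ℝ) T := ⟨le_refl _, hT.le⟩
  have hu00 := hu_int 0 h0T
  have hv00 := hv_int 0 h0T
  have hW1 : ∫⁻ z, ENNReal.ofReal (ωε z) = 1 := kz_lint_total ωε hωε_nonneg hωε_int
  have hHhalf : ∫⁻ s in Set.Ici (0:ℝ), ENNReal.ofReal (ωε₀ s) = ENNReal.ofReal (1/2) :=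
    kz_lint_half ωε₀ hωε₀_nonneg hωε₀_even hωε₀_int
  have hu0 : Measurable fun x : ℝ => u x 0 :=
    hu_meas.comp ((measurable_id.prodMk measurable_const :
      Measurable fun x : ℝ => (x, (0:ℝ))))
  have hv0 : Measurable fun x : ℝ => v x 0 :=
    hv_meas.comp ((measurable_id.prodMk measurable_const :
      Measurable fun x : ℝ => (x, (0:ℝ))))
  -- nonnegativity of the moduli
  have hμu0 : 0 ≤ μu := by have h := hμu 0 (by simp [hε.le]); simpa using h
  have hμv0 : 0 ≤ μv := by have h := hμv 0 (by simp [hε.le]); simpa using h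
  have hνu0 : 0 ≤ νu := by
    have h := hνu 0 le_rfl (le_min hε₀.le hT.le); simpa using h
  have hνv0 : 0 ≤ νv := by
    have h := hνv 0 le_rfl (le_min hε₀.le hT.le); simpa using h
  -- the L¹ distance at time 0
  have hDint : IntegrableOn (fun x => |u x 0 - v x 0|) (Set.Iic 0) := (hu00.sub hv00).abs
  have hI0 : 0 ≤ ∫ x in Set.Iic (0:ℝ), |u x 0 - v x 0| :=
    integral_nonneg fun x => abs_nonneg _
  -- pull a constant factor out of a double integral
  have hpull : ∀ (f : ℝ → ℝ → ENNReal) (r : ENNReal), r ≠ ⊤ →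
      ∫⁻ y in Set.Iic (0:ℝ), ∫⁻ x in Set.Iic (0:ℝ), f x y * r
        = (∫⁻ y in Set.Iic (0:ℝ), ∫⁻ x in Set.Iic (0:ℝ), f x y) * r := by
    intro f r hr
    rw [← lintegral_mul_const' r _ hr]
    exact lintegral_congr fun y => lintegral_mul_const' r _ hr
  have hIcc_Ici : ∫⁻ s in Set.Icc (0:ℝ) T, ENNReal.ofReal (ωε₀ s) ≤ ENNReal.ofReal (1/2) :=
    le_trans (lintegral_mono_set fun t ht => ht.1) (le_of_eq hHhalf)
  -- the key double-integral bound for the `u(x,0) - v(x,0)` term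
  have hswapmeas : Measurable fun q : ℝ × ℝ =>
      ENNReal.ofReal |u q.2 0 - v q.2 0| * ENNReal.ofReal (ωε (q.2 - q.1)) :=
    (((hu0.comp measurable_snd).sub (hv0.comp measurable_snd)).abs.ennreal_ofReal).mul
      ((hωε_meas.comp (measurable_snd.sub measurable_fst)).ennreal_ofReal)
  have hJ1 : ∫⁻ y in Set.Iic (0:ℝ), ∫⁻ x in Set.Iic (0:ℝ),
      ENNReal.ofReal |u x 0 - v x 0| * ENNReal.ofReal (ωε (x - y))
        ≤ ENNReal.ofReal (∫ x in Set.Iic (0:ℝ), |u x 0 - v x 0|) := by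
    rw [lintegral_lintegral_swap hswapmeas.aemeasurable]
    calc ∫⁻ x in Set.Iic (0:ℝ), ∫⁻ y in Set.Iic (0:ℝ),
          ENNReal.ofReal |u x 0 - v x 0| * ENNReal.ofReal (ωε (x - y))
        = ∫⁻ x in Set.Iic (0:ℝ), ENNReal.ofReal |u x 0 - v x 0| *
            ∫⁻ y in Set.Iic (0:ℝ), ENNReal.ofReal (ωε (x - y)) :=
          lintegral_congr fun x => lintegral_const_mul' _ _ ENNReal.ofReal_ne_top
      _ ≤ ∫⁻ x in Set.Iic (0:ℝ), ENNReal.ofReal |u x 0 - v x 0| * 1 := by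
          refine lintegral_mono fun x => mul_le_mul_right ?_ _
          calc ∫⁻ y in Set.Iic (0:ℝ), ENNReal.ofReal (ωε (x - y))
              = ∫⁻ y in Set.Iic (0:ℝ), ENNReal.ofReal (ωε (y - x)) :=
                lintegral_congr fun y => by rw [← hωε_even (y - x), neg_sub]
            _ ≤ 1 := kz_slice ωε hW1 x
      _ = ENNReal.ofReal (∫ x in Set.Iic (0:ℝ), |u x 0 - v x 0|) := by
          simp_rw [mul_one]
          rw [← ofReal_integral_eq_lintegral_ofReal hDint
            (Filter.Eventually.of_forall fun x => abs_nonneg _)]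
  -- spatial bounds
  have hJ2 := kz_spatial ε ωε hωε_meas hωε_supp hW1 (fun x => v x 0) hv0 hv00 μv hμv
  have hJ5 := kz_spatial ε ωε hωε_meas hωε_supp hW1 (fun x => u x 0) hu0 hu00 μu hμu
  -- the six term bounds
  have hB1 : ∫⁻ s in Set.Icc (0:ℝ) T, ∫⁻ y in Set.Iic (0:ℝ), ∫⁻ x in Set.Iic (0:ℝ),
      ENNReal.ofReal |u x 0 - v x 0| * ENNReal.ofReal (ωε (x - y)) * ENNReal.ofReal (ωε₀ s)
      ≤ ENNReal.ofReal (∫ x in Set.Iic (0:ℝ), |u x 0 - v x 0|) * ENNReal.ofReal (1/2) := by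
    calc ∫⁻ s in Set.Icc (0:ℝ) T, ∫⁻ y in Set.Iic (0:ℝ), ∫⁻ x in Set.Iic (0:ℝ),
          ENNReal.ofReal |u x 0 - v x 0| * ENNReal.ofReal (ωε (x - y)) * ENNReal.ofReal (ωε₀ s)
        = ∫⁻ s in Set.Icc (0:ℝ) T, (∫⁻ y in Set.Iic (0:ℝ), ∫⁻ x in Set.Iic (0:ℝ),
            ENNReal.ofReal |u x 0 - v x 0| * ENNReal.ofReal (ωε (x - y))) *
            ENNReal.ofReal (ωε₀ s) :=
          lintegral_congr fun s => hpull _ _ ENNReal.ofReal_ne_top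
      _ ≤ ∫⁻ s in Set.Icc (0:ℝ) T,
            ENNReal.ofReal (∫ x in Set.Iic (0:ℝ), |u x 0 - v x 0|) *
            ENNReal.ofReal (ωε₀ s) :=
          lintegral_mono fun s => mul_le_mul_left hJ1 _
      _ = ENNReal.ofReal (∫ x in Set.Iic (0:ℝ), |u x 0 - v x 0|) *
            ∫⁻ s in Set.Icc (0:ℝ) T, ENNReal.ofReal (ωε₀ s) :=
          lintegral_const_mul' _ _ ENNReal.ofReal_ne_top
      _ ≤ _ := mul_le_mul_right hIcc_Ici _
  have hB2 : ∫⁻ s in Set.Icc (0:ℝ) T, ∫⁻ y in Set.Iic (0:ℝ), ∫⁻ x in Set.Iic (0:ℝ),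
      ENNReal.ofReal |v x 0 - v y 0| * ENNReal.ofReal (ωε (x - y)) * ENNReal.ofReal (ωε₀ s)
      ≤ ENNReal.ofReal μv * ENNReal.ofReal (1/2) := by
    calc ∫⁻ s in Set.Icc (0:ℝ) T, ∫⁻ y in Set.Iic (0:ℝ), ∫⁻ x in Set.Iic (0:ℝ),
          ENNReal.ofReal |v x 0 - v y 0| * ENNReal.ofReal (ωε (x - y)) * ENNReal.ofReal (ωε₀ s)
        = ∫⁻ s in Set.Icc (0:ℝ) T, (∫⁻ y in Set.Iic (0:ℝ), ∫⁻ x in Set.Iic (0:ℝ),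
            ENNReal.ofReal |v x 0 - v y 0| * ENNReal.ofReal (ωε (x - y))) *
            ENNReal.ofReal (ωε₀ s) :=
          lintegral_congr fun s => hpull _ _ ENNReal.ofReal_ne_top
      _ ≤ ∫⁻ s in Set.Icc (0:ℝ) T, ENNReal.ofReal μv * ENNReal.ofReal (ωε₀ s) :=
          lintegral_mono fun s => mul_le_mul_left hJ2 _
      _ = ENNReal.ofReal μv * ∫⁻ s in Set.Icc (0:ℝ) T, ENNReal.ofReal (ωε₀ s) :=
          lintegral_const_mul' _ _ ENNReal.ofReal_ne_top
      _ ≤ _ := mul_le_mul_right hIcc_Ici _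
  have hB5 : ∫⁻ s in Set.Icc (0:ℝ) T, ∫⁻ y in Set.Iic (0:ℝ), ∫⁻ x in Set.Iic (0:ℝ),
      ENNReal.ofReal |u x 0 - u y 0| * ENNReal.ofReal (ωε (x - y)) * ENNReal.ofReal (ωε₀ s)
      ≤ ENNReal.ofReal μu * ENNReal.ofReal (1/2) := by
    calc ∫⁻ s in Set.Icc (0:ℝ) T, ∫⁻ y in Set.Iic (0:ℝ), ∫⁻ x in Set.Iic (0:ℝ),
          ENNReal.ofReal |u x 0 - u y 0| * ENNReal.ofReal (ωε (x - y)) * ENNReal.ofReal (ωε₀ s)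
        = ∫⁻ s in Set.Icc (0:ℝ) T, (∫⁻ y in Set.Iic (0:ℝ), ∫⁻ x in Set.Iic (0:ℝ),
            ENNReal.ofReal |u x 0 - u y 0| * ENNReal.ofReal (ωε (x - y))) *
            ENNReal.ofReal (ωε₀ s) :=
          lintegral_congr fun s => hpull _ _ ENNReal.ofReal_ne_top
      _ ≤ ∫⁻ s in Set.Icc (0:ℝ) T, ENNReal.ofReal μu * ENNReal.ofReal (ωε₀ s) :=
          lintegral_mono fun s => mul_le_mul_left hJ5 _
      _ = ENNReal.ofReal μu * ∫⁻ s in Set.Icc (0:ℝ) T, ENNReal.ofReal (ωε₀ s) :=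
          lintegral_const_mul' _ _ ENNReal.ofReal_ne_top
      _ ≤ _ := mul_le_mul_right hIcc_Ici _
  have hB3 : ∫⁻ s in Set.Icc (0:ℝ) T, ∫⁻ y in Set.Iic (0:ℝ), ∫⁻ x in Set.Iic (0:ℝ),
      ENNReal.ofReal |v y 0 - v y s| * ENNReal.ofReal (ωε (x - y)) * ENNReal.ofReal (ωε₀ s)
      ≤ ENNReal.ofReal νv * ENNReal.ofReal (1/2) := by
    refine le_trans (lintegral_mono fun s => ?_)
      (kz_temporal T ε₀ hT ωε₀ hωε₀_meas hωε₀_supp hHhalf v hv_int νv hνv)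
    calc ∫⁻ y in Set.Iic (0:ℝ), ∫⁻ x in Set.Iic (0:ℝ),
          ENNReal.ofReal |v y 0 - v y s| * ENNReal.ofReal (ωε (x - y)) * ENNReal.ofReal (ωε₀ s)
        ≤ ∫⁻ y in Set.Iic (0:ℝ), ENNReal.ofReal |v y 0 - v y s| * ENNReal.ofReal (ωε₀ s) := by
          refine lintegral_mono fun y => ?_
          calc ∫⁻ x in Set.Iic (0:ℝ), ENNReal.ofReal |v y 0 - v y s| *
                ENNReal.ofReal (ωε (x - y)) * ENNReal.ofReal (ωε₀ s)
              = (∫⁻ x in Set.Iic (0:ℝ), ENNReal.ofReal |v y 0 - v y s| *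
                  ENNReal.ofReal (ωε (x - y))) * ENNReal.ofReal (ωε₀ s) :=
                lintegral_mul_const' _ _ ENNReal.ofReal_ne_top
            _ = (ENNReal.ofReal |v y 0 - v y s| *
                  ∫⁻ x in Set.Iic (0:ℝ), ENNReal.ofReal (ωε (x - y))) * ENNReal.ofReal (ωε₀ s) := by
                rw [lintegral_const_mul' _ _ ENNReal.ofReal_ne_top]
            _ ≤ (ENNReal.ofReal |v y 0 - v y s| * 1) * ENNReal.ofReal (ωε₀ s) :=
                mul_le_mul_left (mul_le_mul_right (kz_slice ωε hW1 y) _) _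
            _ = ENNReal.ofReal |v y 0 - v y s| * ENNReal.ofReal (ωε₀ s) := by rw [mul_one]
      _ = (∫⁻ y in Set.Iic (0:ℝ), ENNReal.ofReal |v y 0 - v y s|) * ENNReal.ofReal (ωε₀ s) :=
          lintegral_mul_const' _ _ ENNReal.ofReal_ne_top
  have hB6 : ∫⁻ s in Set.Icc (0:ℝ) T, ∫⁻ y in Set.Iic (0:ℝ), ∫⁻ x in Set.Iic (0:ℝ),
      ENNReal.ofReal |u y 0 - u y s| * ENNReal.ofReal (ωε (x - y)) * ENNReal.ofReal (ωε₀ s)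
      ≤ ENNReal.ofReal νu * ENNReal.ofReal (1/2) := by
    refine le_trans (lintegral_mono fun s => ?_)
      (kz_temporal T ε₀ hT ωε₀ hωε₀_meas hωε₀_supp hHhalf u hu_int νu hνu)
    calc ∫⁻ y in Set.Iic (0:ℝ), ∫⁻ x in Set.Iic (0:ℝ),
          ENNReal.ofReal |u y 0 - u y s| * ENNReal.ofReal (ωε (x - y)) * ENNReal.ofReal (ωε₀ s)
        ≤ ∫⁻ y in Set.Iic (0:ℝ), ENNReal.ofReal |u y 0 - u y s| * ENNReal.ofReal (ωε₀ s) := by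
          refine lintegral_mono fun y => ?_
          calc ∫⁻ x in Set.Iic (0:ℝ), ENNReal.ofReal |u y 0 - u y s| *
                ENNReal.ofReal (ωε (x - y)) * ENNReal.ofReal (ωε₀ s)
              = (∫⁻ x in Set.Iic (0:ℝ), ENNReal.ofReal |u y 0 - u y s| *
                  ENNReal.ofReal (ωε (x - y))) * ENNReal.ofReal (ωε₀ s) :=
                lintegral_mul_const' _ _ ENNReal.ofReal_ne_top
            _ = (ENNReal.ofReal |u y 0 - u y s| *
                  ∫⁻ x in Set.Iic (0:ℝ), ENNReal.ofReal (ωε (x - y))) * ENNReal.ofReal (ωε₀ s) := by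
                rw [lintegral_const_mul' _ _ ENNReal.ofReal_ne_top]
            _ ≤ (ENNReal.ofReal |u y 0 - u y s| * 1) * ENNReal.ofReal (ωε₀ s) :=
                mul_le_mul_left (mul_le_mul_right (kz_slice ωε hW1 y) _) _
            _ = ENNReal.ofReal |u y 0 - u y s| * ENNReal.ofReal (ωε₀ s) := by rw [mul_one]
      _ = (∫⁻ y in Set.Iic (0:ℝ), ENNReal.ofReal |u y 0 - u y s|) * ENNReal.ofReal (ωε₀ s) :=
          lintegral_mul_const' _ _ ENNReal.ofReal_ne_top
  -- measurability of the six integrands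
  have hux : Measurable fun p : ℝ × ℝ × ℝ => u p.1 0 := hu0.comp measurable_fst
  have hvx : Measurable fun p : ℝ × ℝ × ℝ => v p.1 0 := hv0.comp measurable_fst
  have huy : Measurable fun p : ℝ × ℝ × ℝ => u p.2.1 0 :=
    hu0.comp (measurable_fst.comp measurable_snd)
  have hvy : Measurable fun p : ℝ × ℝ × ℝ => v p.2.1 0 :=
    hv0.comp (measurable_fst.comp measurable_snd)
  have huys : Measurable fun p : ℝ × ℝ × ℝ => u p.2.1 p.2.2 :=
    hu_meas.comp (((measurable_fst.comp measurable_snd).prodMk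
      (measurable_snd.comp measurable_snd) :
      Measurable fun p : ℝ × ℝ × ℝ => (p.2.1, p.2.2)))
  have hvys : Measurable fun p : ℝ × ℝ × ℝ => v p.2.1 p.2.2 :=
    hv_meas.comp (((measurable_fst.comp measurable_snd).prodMk
      (measurable_snd.comp measurable_snd) :
      Measurable fun p : ℝ × ℝ × ℝ => (p.2.1, p.2.2)))
  have hWp : Measurable fun p : ℝ × ℝ × ℝ => ENNReal.ofReal (ωε (p.1 - p.2.1)) :=
    (hωε_meas.comp (measurable_fst.sub (measurable_fst.comp measurable_snd))).ennreal_ofReal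
  have hHp : Measurable fun p : ℝ × ℝ × ℝ => ENNReal.ofReal (ωε₀ p.2.2) :=
    (hωε₀_meas.comp (measurable_snd.comp measurable_snd)).ennreal_ofReal
  have hM1 : Measurable fun p : ℝ × ℝ × ℝ =>
      ENNReal.ofReal |u p.1 0 - v p.1 0| * ENNReal.ofReal (ωε (p.1 - p.2.1)) *
        ENNReal.ofReal (ωε₀ p.2.2) :=
    (((hux.sub hvx).abs.ennreal_ofReal).mul hWp).mul hHp
  have hM2 : Measurable fun p : ℝ × ℝ × ℝ =>
      ENNReal.ofReal |v p.1 0 - v p.2.1 0| * ENNReal.ofReal (ωε (p.1 - p.2.1)) *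
        ENNReal.ofReal (ωε₀ p.2.2) :=
    (((hvx.sub hvy).abs.ennreal_ofReal).mul hWp).mul hHp
  have hM3 : Measurable fun p : ℝ × ℝ × ℝ =>
      ENNReal.ofReal |v p.2.1 0 - v p.2.1 p.2.2| * ENNReal.ofReal (ωε (p.1 - p.2.1)) *
        ENNReal.ofReal (ωε₀ p.2.2) :=
    (((hvy.sub hvys).abs.ennreal_ofReal).mul hWp).mul hHp
  have hM5 : Measurable fun p : ℝ × ℝ × ℝ =>
      ENNReal.ofReal |u p.1 0 - u p.2.1 0| * ENNReal.ofReal (ωε (p.1 - p.2.1)) *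
        ENNReal.ofReal (ωε₀ p.2.2) :=
    (((hux.sub huy).abs.ennreal_ofReal).mul hWp).mul hHp
  have hM6 : Measurable fun p : ℝ × ℝ × ℝ =>
      ENNReal.ofReal |u p.2.1 0 - u p.2.1 p.2.2| * ENNReal.ofReal (ωε (p.1 - p.2.1)) *
        ENNReal.ofReal (ωε₀ p.2.2) :=
    (((huy.sub huys).abs.ennreal_ofReal).mul hWp).mul hHp
  -- pointwise triangle-inequality bound
  have hpt : ∀ s y x : ℝ,
      ENNReal.ofReal ((|u x 0 - v y s| + |v x 0 - u y s|) * ωε (x - y) * ωε₀ s) ≤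
      ENNReal.ofReal |u x 0 - v x 0| * ENNReal.ofReal (ωε (x - y)) * ENNReal.ofReal (ωε₀ s) +
      (ENNReal.ofReal |v x 0 - v y 0| * ENNReal.ofReal (ωε (x - y)) * ENNReal.ofReal (ωε₀ s) +
      (ENNReal.ofReal |v y 0 - v y s| * ENNReal.ofReal (ωε (x - y)) * ENNReal.ofReal (ωε₀ s) +
      (ENNReal.ofReal |u x 0 - v x 0| * ENNReal.ofReal (ωε (x - y)) * ENNReal.ofReal (ωε₀ s) +
      (ENNReal.ofReal |u x 0 - u y 0| * ENNReal.ofReal (ωε (x - y)) * ENNReal.ofReal (ωε₀ s) +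
       ENNReal.ofReal |u y 0 - u y s| * ENNReal.ofReal (ωε (x - y)) * ENNReal.ofReal (ωε₀ s))))) := by
    intro s y x
    rw [ENNReal.ofReal_mul (mul_nonneg (by positivity) (hωε_nonneg _)),
      ENNReal.ofReal_mul (by positivity)]
    have habs : |u x 0 - v y s| + |v x 0 - u y s| ≤
        |u x 0 - v x 0| + |v x 0 - v y 0| + |v y 0 - v y s| +
        (|u x 0 - v x 0| + |u x 0 - u y 0| + |u y 0 - u y s|) := by
      have t1 : |u x 0 - v y s| ≤ |u x 0 - v x 0| + |v x 0 - v y 0| + |v y 0 - v y s| := by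
        have h' : u x 0 - v y s = (u x 0 - v x 0) + (v x 0 - v y 0) + (v y 0 - v y s) := by ring
        rw [h']; exact abs_add_three _ _ _
      have t2 : |v x 0 - u y s| ≤ |u x 0 - v x 0| + |u x 0 - u y 0| + |u y 0 - u y s| := by
        have h' : v x 0 - u y s = (v x 0 - u x 0) + (u x 0 - u y 0) + (u y 0 - u y s) := by ring
        rw [h']
        refine (abs_add_three _ _ _).trans ?_
        rw [abs_sub_comm (v x 0) (u x 0)]
      exact add_le_add t1 t2
    calc ENNReal.ofReal (|u x 0 - v y s| + |v x 0 - u y s|) * ENNReal.ofReal (ωε (x - y)) *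
          ENNReal.ofReal (ωε₀ s)
        ≤ ENNReal.ofReal (|u x 0 - v x 0| + |v x 0 - v y 0| + |v y 0 - v y s| +
            (|u x 0 - v x 0| + |u x 0 - u y 0| + |u y 0 - u y s|)) *
            ENNReal.ofReal (ωε (x - y)) * ENNReal.ofReal (ωε₀ s) :=
          mul_le_mul_left (mul_le_mul_left (ENNReal.ofReal_le_ofReal habs) _) _
      _ = _ := by
          rw [ENNReal.ofReal_add (by positivity) (by positivity),
            ENNReal.ofReal_add (by positivity) (by positivity),
            ENNReal.ofReal_add (by positivity) (by positivity),
            ENNReal.ofReal_add (by positivity) (by positivity),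
            ENNReal.ofReal_add (by positivity) (by positivity)]
          ring
  have hhh : ENNReal.ofReal (1/2 : ℝ) + ENNReal.ofReal (1/2 : ℝ) = 1 := by
    rw [← ENNReal.ofReal_add (by norm_num) (by norm_num)]; norm_num
  have key : ∀ a b c d e h1 : ENNReal, h1 + h1 = 1 →
      a * h1 + (b * h1 + (c * h1 + (a * h1 + (d * h1 + e * h1)))) = a + h1 * (e + d + c + b) := by
    intro a b c d e h1 hh
    calc a * h1 + (b * h1 + (c * h1 + (a * h1 + (d * h1 + e * h1))))
        = a * (h1 + h1) + h1 * (e + d + c + b) := by ring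
      _ = a + h1 * (e + d + c + b) := by rw [hh, mul_one]
  calc ∫⁻ s in Set.Icc (0 : ℝ) T, ∫⁻ y in Set.Iic (0 : ℝ), ∫⁻ x in Set.Iic (0 : ℝ),
        ENNReal.ofReal ((|u x 0 - v y s| + |v x 0 - u y s|) * ωε (x - y) * ωε₀ s)
      ≤ ∫⁻ s in Set.Icc (0 : ℝ) T, ∫⁻ y in Set.Iic (0 : ℝ), ∫⁻ x in Set.Iic (0 : ℝ),
        (ENNReal.ofReal |u x 0 - v x 0| * ENNReal.ofReal (ωε (x - y)) * ENNReal.ofReal (ωε₀ s) +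
        (ENNReal.ofReal |v x 0 - v y 0| * ENNReal.ofReal (ωε (x - y)) * ENNReal.ofReal (ωε₀ s) +
        (ENNReal.ofReal |v y 0 - v y s| * ENNReal.ofReal (ωε (x - y)) * ENNReal.ofReal (ωε₀ s) +
        (ENNReal.ofReal |u x 0 - v x 0| * ENNReal.ofReal (ωε (x - y)) * ENNReal.ofReal (ωε₀ s) +
        (ENNReal.ofReal |u x 0 - u y 0| * ENNReal.ofReal (ωε (x - y)) * ENNReal.ofReal (ωε₀ s) +
         ENNReal.ofReal |u y 0 - u y s| * ENNReal.ofReal (ωε (x - y)) * ENNReal.ofReal (ωε₀ s)))))) :=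
        lintegral_mono fun s => lintegral_mono fun y => lintegral_mono fun x => hpt s y x
    _ = (∫⁻ s in Set.Icc (0 : ℝ) T, ∫⁻ y in Set.Iic (0 : ℝ), ∫⁻ x in Set.Iic (0 : ℝ),
          ENNReal.ofReal |u x 0 - v x 0| * ENNReal.ofReal (ωε (x - y)) * ENNReal.ofReal (ωε₀ s)) +
        ((∫⁻ s in Set.Icc (0 : ℝ) T, ∫⁻ y in Set.Iic (0 : ℝ), ∫⁻ x in Set.Iic (0 : ℝ),
          ENNReal.ofReal |v x 0 - v y 0| * ENNReal.ofReal (ωε (x - y)) * ENNReal.ofReal (ωε₀ s)) +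
        ((∫⁻ s in Set.Icc (0 : ℝ) T, ∫⁻ y in Set.Iic (0 : ℝ), ∫⁻ x in Set.Iic (0 : ℝ),
          ENNReal.ofReal |v y 0 - v y s| * ENNReal.ofReal (ωε (x - y)) * ENNReal.ofReal (ωε₀ s)) +
        ((∫⁻ s in Set.Icc (0 : ℝ) T, ∫⁻ y in Set.Iic (0 : ℝ), ∫⁻ x in Set.Iic (0 : ℝ),
          ENNReal.ofReal |u x 0 - v x 0| * ENNReal.ofReal (ωε (x - y)) * ENNReal.ofReal (ωε₀ s)) +
        ((∫⁻ s in Set.Icc (0 : ℝ) T, ∫⁻ y in Set.Iic (0 : ℝ), ∫⁻ x in Set.Iic (0 : ℝ),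
          ENNReal.ofReal |u x 0 - u y 0| * ENNReal.ofReal (ωε (x - y)) * ENNReal.ofReal (ωε₀ s)) +
         (∫⁻ s in Set.Icc (0 : ℝ) T, ∫⁻ y in Set.Iic (0 : ℝ), ∫⁻ x in Set.Iic (0 : ℝ),
          ENNReal.ofReal |u y 0 - u y s| * ENNReal.ofReal (ωε (x - y)) * ENNReal.ofReal (ωε₀ s)))))) :=
        kz_triple_split6 _ _ _ _ _ _ hM1 hM2 hM3 hM1 hM5 hM6
    _ ≤ ENNReal.ofReal (∫ x in Set.Iic (0:ℝ), |u x 0 - v x 0|) * ENNReal.ofReal (1/2) +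
        (ENNReal.ofReal μv * ENNReal.ofReal (1/2) +
        (ENNReal.ofReal νv * ENNReal.ofReal (1/2) +
        (ENNReal.ofReal (∫ x in Set.Iic (0:ℝ), |u x 0 - v x 0|) * ENNReal.ofReal (1/2) +
        (ENNReal.ofReal μu * ENNReal.ofReal (1/2) +
         ENNReal.ofReal νu * ENNReal.ofReal (1/2))))) :=
        add_le_add hB1 (add_le_add hB2 (add_le_add hB3 (add_le_add hB1
          (add_le_add hB5 hB6))))
    _ = ENNReal.ofReal
        ((∫ x in Set.Iic (0 : ℝ), |u x 0 - v x 0|) + (1 / 2) * (νu + μu + νv + μv)) := by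
        rw [ENNReal.ofReal_add hI0 (by positivity),
          ENNReal.ofReal_mul (by norm_num : (0:ℝ) ≤ 1/2),
          ENNReal.ofReal_add (add_nonneg (add_nonneg hνu0 hμu0) hνv0) hμv0,
          ENNReal.ofReal_add (add_nonneg hνu0 hμu0) hνv0,
          ENNReal.ofReal_add hνu0 hμu0]
        exact key _ _ _ _ _ _ hhh
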